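/- arXiv:1904.01122 — 4 statements merged into one kernel-verified Lean document; each statement's English description precedes it below -/
import Mathlib

section
/- Let U ⊆ ℝ³ be open and let η : U → ℝ³ be twice continuously differentiable such that its Jacobian matrix Dη (with entries [Dη]^i_j = ∂_j η^i) is invertible at every point of U. Set 𝒜 = [Dη]^{-1} (entries 𝒜^k_i), 𝒥 = det Dη, and a = 𝒥𝒜. Then the Piola identity holds: for each i ∈ {1,2,3}, Σ_{k=1}^{3} ∂_k (a^k_i) = 0 everywhere on U. -/
/-- Partial derivative `∂_j f` of a scalar function on `ℝ³`. -/
noncomputable def pd (j : Fin 3) (f : (Fin 3 → ℝ) → ℝ) (x : Fin 3 → ℝ) : ℝ :=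
  fderiv ℝ f x (Pi.single j 1)

/-- Jacobian matrix `Dη`, entries `[Dη]^i_j = ∂_j η^i`. -/
noncomputable def jacM (η : (Fin 3 → ℝ) → (Fin 3 → ℝ)) (x : Fin 3 → ℝ) :
    Matrix (Fin 3) (Fin 3) ℝ :=
  Matrix.of fun i j => pd j (fun y => η y i) x

lemma pd_entry (k : Fin 3) (p q r s : (Fin 3 → ℝ) → ℝ) (x : Fin 3 → ℝ)
    (hp : DifferentiableAt ℝ p x) (hq : DifferentiableAt ℝ q x)
    (hr : DifferentiableAt ℝ r x) (hs : DifferentiableAt ℝ s x) :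
    pd k (fun y => p y * q y - r y * s y) x =
      (pd k p x * q x + p x * pd k q x) - (pd k r x * s x + r x * pd k s x) := by
  unfold pd
  rw [fderiv_fun_sub (f := fun y => p y * q y) (g := fun y => r y * s y) (hp.mul hq) (hr.mul hs), fderiv_fun_mul hp hq, fderiv_fun_mul hr hs]
  simp
  ring

lemma diffAt_pd (U : Set (Fin 3 → ℝ)) (hU : IsOpen U)
    (η : (Fin 3 → ℝ) → (Fin 3 → ℝ)) (hη : ContDiffOn ℝ 2 η U)
    (a b : Fin 3) (x : Fin 3 → ℝ) (hx : x ∈ U) :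
    DifferentiableAt ℝ (fun y => pd b (fun z => η z a) y) x := by
  have hfa : ContDiffOn ℝ 2 (fun z => η z a) U :=
    (ContinuousLinearMap.proj a : ((Fin 3 → ℝ)) →L[ℝ] ℝ).contDiff.comp_contDiffOn hη
  have h1 : ContDiffOn ℝ 1 (fun y => fderiv ℝ (fun z => η z a) y) U :=
    hfa.fderiv_of_isOpen hU (by norm_num)
  have h2 : ContDiffOn ℝ 1
      (fun y => (ContinuousLinearMap.apply ℝ ℝ (Pi.single b 1 : Fin 3 → ℝ))
        (fderiv ℝ (fun z => η z a) y)) U :=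
    (ContinuousLinearMap.apply ℝ ℝ (Pi.single b 1 : Fin 3 → ℝ)).contDiff.comp_contDiffOn h1
  exact ((h2.differentiableOn one_ne_zero).differentiableAt (hU.mem_nhds hx))

lemma pd_pd_symm (U : Set (Fin 3 → ℝ)) (hU : IsOpen U)
    (η : (Fin 3 → ℝ) → (Fin 3 → ℝ)) (hη : ContDiffOn ℝ 2 η U)
    (a : Fin 3) (x : Fin 3 → ℝ) (hx : x ∈ U) (b c : Fin 3) :
    pd c (fun y => pd b (fun z => η z a) y) x = pd b (fun y => pd c (fun z => η z a) y) x := by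
  have hfa : ContDiffOn ℝ 2 (fun z => η z a) U :=
    (ContinuousLinearMap.proj a : ((Fin 3 → ℝ)) →L[ℝ] ℝ).contDiff.comp_contDiffOn hη
  have hca : ContDiffAt ℝ 2 (fun z => η z a) x := hfa.contDiffAt (hU.mem_nhds hx)
  have hd : DifferentiableAt ℝ (fderiv ℝ (fun z => η z a)) x :=
    (hca.fderiv_right (m := 1) (by norm_num)).differentiableAt one_ne_zero
  have hsymm := hca.isSymmSndFDerivAt (by simp)
  have key : ∀ v w : Fin 3 → ℝ,
      fderiv ℝ (fun y => fderiv ℝ (fun z => η z a) y v) x w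
        = fderiv ℝ (fderiv ℝ (fun z => η z a)) x w v := by
    intro v w
    rw [fderiv_clm_apply hd (differentiableAt_const v)]
    simp
  show fderiv ℝ (fun y => fderiv ℝ (fun z => η z a) y (Pi.single b 1)) x (Pi.single c 1) = _
  rw [key, hsymm, ← key]
  rfl

/-- **Piola identity.**  If `η : U → ℝ³` is `C²` on an open set `U ⊆ ℝ³` with everywhere
invertible Jacobian, and `a = 𝒥 𝒜` where `𝒜 = [Dη]⁻¹`, `𝒥 = det Dη`, then
`Σ_k ∂_k (a^k_i) = 0` on `U` for each `i`. -/
theorem piola_identity (U : Set (Fin 3 → ℝ)) (hU : IsOpen U)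
    (η : (Fin 3 → ℝ) → (Fin 3 → ℝ)) (hη : ContDiffOn ℝ 2 η U)
    (hinv : ∀ x ∈ U, IsUnit (jacM η x)) :
    ∀ i : Fin 3, ∀ x ∈ U,
      (∑ k : Fin 3, pd k (fun y => (jacM η y).det * ((jacM η y)⁻¹ k i)) x) = 0 := by
  intro i x hx
  have step1 : ∀ k : Fin 3, pd k (fun y => (jacM η y).det * ((jacM η y)⁻¹ k i)) x
      = pd k (fun y => (jacM η y).adjugate k i) x := by
    intro k
    unfold pd
    congr 1
    apply Filter.EventuallyEq.fderiv_eq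
    filter_upwards [hU.mem_nhds hx] with y hy
    have hu : IsUnit (jacM η y).det := (Matrix.isUnit_iff_isUnit_det _).1 (hinv y hy)
    rw [Matrix.inv_def, Matrix.smul_apply, smul_eq_mul, ← mul_assoc,
      Ring.mul_inverse_cancel _ hu, one_mul]
  simp only [step1]
  have hD : ∀ a b : Fin 3, DifferentiableAt ℝ (fun y => pd b (fun z => η z a) y) x :=
    fun a b => diffAt_pd U hU η hη a b x hx
  have hS : ∀ a b c : Fin 3,
      pd c (fun y => pd b (fun z => η z a) y) x = pd b (fun y => pd c (fun z => η z a) y) x :=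
    fun a b c => pd_pd_symm U hU η hη a x hx b c
  rw [Fin.sum_univ_three]
  have hadj : ∀ k j : Fin 3, (fun y => (jacM η y).adjugate k j) =
      (fun y => Matrix.adjugate (jacM η y) k j) := fun _ _ => rfl
  fin_cases i <;> simp only [Fin.zero_eta, Fin.mk_one, Fin.reduceFinMk, Fin.isValue]
  · have h0 : (fun y => (jacM η y).adjugate 0 (0 : Fin 3))
        = fun y => pd 1 (fun z => η z 1) y * pd 2 (fun z => η z 2) y
            - pd 2 (fun z => η z 1) y * pd 1 (fun z => η z 2) y := by
      funext y
      rw [Matrix.adjugate_fin_three]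
      simp [jacM]
    have h1 : (fun y => (jacM η y).adjugate 1 (0 : Fin 3))
        = fun y => pd 2 (fun z => η z 1) y * pd 0 (fun z => η z 2) y
            - pd 0 (fun z => η z 1) y * pd 2 (fun z => η z 2) y := by
      funext y
      rw [Matrix.adjugate_fin_three]
      simp [jacM]
      ring
    have h2 : (fun y => (jacM η y).adjugate 2 (0 : Fin 3))
        = fun y => pd 0 (fun z => η z 1) y * pd 1 (fun z => η z 2) y
            - pd 1 (fun z => η z 1) y * pd 0 (fun z => η z 2) y := by
      funext y
      rw [Matrix.adjugate_fin_three]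
      simp [jacM]
    rw [h0, h1, h2, pd_entry _ _ _ _ _ _ (hD 1 1) (hD 2 2) (hD 1 2) (hD 2 1),
      pd_entry _ _ _ _ _ _ (hD 1 2) (hD 2 0) (hD 1 0) (hD 2 2),
      pd_entry _ _ _ _ _ _ (hD 1 0) (hD 2 1) (hD 1 1) (hD 2 0)]
    linear_combination (pd 2 (fun z => η z 2) x) * hS 1 1 0
      + (pd 1 (fun z => η z 1) x) * hS 2 2 0
      - (pd 1 (fun z => η z 2) x) * hS 1 2 0
      - (pd 2 (fun z => η z 1) x) * hS 2 1 0
      + (pd 0 (fun z => η z 2) x) * hS 1 2 1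
      - (pd 0 (fun z => η z 1) x) * hS 2 2 1
  · have h0 : (fun y => (jacM η y).adjugate 0 (1 : Fin 3))
        = fun y => pd 2 (fun z => η z 0) y * pd 1 (fun z => η z 2) y
            - pd 1 (fun z => η z 0) y * pd 2 (fun z => η z 2) y := by
      funext y
      rw [Matrix.adjugate_fin_three]
      simp [jacM]
      ring
    have h1 : (fun y => (jacM η y).adjugate 1 (1 : Fin 3))
        = fun y => pd 0 (fun z => η z 0) y * pd 2 (fun z => η z 2) y
            - pd 2 (fun z => η z 0) y * pd 0 (fun z => η z 2) y := by
      funext y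
      rw [Matrix.adjugate_fin_three]
      simp [jacM]
    have h2 : (fun y => (jacM η y).adjugate 2 (1 : Fin 3))
        = fun y => pd 1 (fun z => η z 0) y * pd 0 (fun z => η z 2) y
            - pd 0 (fun z => η z 0) y * pd 1 (fun z => η z 2) y := by
      funext y
      rw [Matrix.adjugate_fin_three]
      simp [jacM]
      ring
    rw [h0, h1, h2, pd_entry _ _ _ _ _ _ (hD 0 2) (hD 2 1) (hD 0 1) (hD 2 2),
      pd_entry _ _ _ _ _ _ (hD 0 0) (hD 2 2) (hD 0 2) (hD 2 0),
      pd_entry _ _ _ _ _ _ (hD 0 1) (hD 2 0) (hD 0 0) (hD 2 1)]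
    linear_combination (pd 1 (fun z => η z 2) x) * hS 0 2 0
      + (pd 2 (fun z => η z 0) x) * hS 2 1 0
      - (pd 2 (fun z => η z 2) x) * hS 0 1 0
      - (pd 1 (fun z => η z 0) x) * hS 2 2 0
      + (pd 0 (fun z => η z 0) x) * hS 2 2 1
      - (pd 0 (fun z => η z 2) x) * hS 0 2 1
  · have h0 : (fun y => (jacM η y).adjugate 0 (2 : Fin 3))
        = fun y => pd 1 (fun z => η z 0) y * pd 2 (fun z => η z 1) y
            - pd 2 (fun z => η z 0) y * pd 1 (fun z => η z 1) y := by
      funext y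
      rw [Matrix.adjugate_fin_three]
      simp [jacM]
    have h1 : (fun y => (jacM η y).adjugate 1 (2 : Fin 3))
        = fun y => pd 2 (fun z => η z 0) y * pd 0 (fun z => η z 1) y
            - pd 0 (fun z => η z 0) y * pd 2 (fun z => η z 1) y := by
      funext y
      rw [Matrix.adjugate_fin_three]
      simp [jacM]
      ring
    have h2 : (fun y => (jacM η y).adjugate 2 (2 : Fin 3))
        = fun y => pd 0 (fun z => η z 0) y * pd 1 (fun z => η z 1) y
            - pd 1 (fun z => η z 0) y * pd 0 (fun z => η z 1) y := by
      funext y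
      rw [Matrix.adjugate_fin_three]
      simp [jacM]
    rw [h0, h1, h2, pd_entry _ _ _ _ _ _ (hD 0 1) (hD 1 2) (hD 0 2) (hD 1 1),
      pd_entry _ _ _ _ _ _ (hD 0 2) (hD 1 0) (hD 0 0) (hD 1 2),
      pd_entry _ _ _ _ _ _ (hD 0 0) (hD 1 1) (hD 0 1) (hD 1 0)]
    linear_combination (pd 2 (fun z => η z 1) x) * hS 0 1 0
      + (pd 0 (fun z => η z 1) x) * hS 0 2 1
      - (pd 1 (fun z => η z 1) x) * hS 0 2 0
      - (pd 2 (fun z => η z 0) x) * hS 1 1 0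
      + (pd 1 (fun z => η z 0) x) * hS 1 2 0
      - (pd 0 (fun z => η z 0) x) * hS 1 2 1
end

section
/- Let α > 0, β = 3/α, let Ω ⊆ ℝ³, and let w : Ω → [0,∞) be continuously differentiable. Let η : [0,∞) × Ω → ℝ³ be twice continuously differentiable such that for each t the spatial Jacobian ℳ = Dη is invertible with 𝒥 = det Dη > 0, and set 𝒜 = ℳ^{-1}. Suppose that for i = 1,2,3, w^α ∂_{tt}η^i + Σ_k ∂_k( w^{1+α} 𝒜^k_i 𝒥^{-1/α} ) = 0 on (0,∞) × Ω. Define the rescaled variables τ = log(1+t) and ζ(τ,x) = e^{-τ} η(e^τ − 1, x), and let 𝒜̃ = [Dζ]^{-1} and 𝒥̃ = det Dζ (spatial Jacobian of ζ). Then ζ satisfies, for i = 1,2,3 and all τ > 0, w^α e^{βτ}( ∂_{ττ}ζ^i + ∂_τ ζ^i ) + Σ_k ∂_k( w^{1+α} 𝒜̃^k_i 𝒥̃^{-1/α} ) = 0 on Ω. -/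
open Set Topology

/-- `fderiv` of a constant multiple, unconditionally for nonzero constant. -/
theorem fderiv_const_mul' {f : (Fin 3 → ℝ) → ℝ} {x : Fin 3 → ℝ} {c : ℝ} (hc : c ≠ 0) :
    fderiv ℝ (fun y => c * f y) x = c • fderiv ℝ f x := by
  by_cases h : DifferentiableAt ℝ f x
  · exact fderiv_const_mul h c
  · have h2 : ¬ DifferentiableAt ℝ (fun y => c * f y) x := by
      intro h2
      have : DifferentiableAt ℝ (fun y => c⁻¹ * (c * f y)) x := h2.const_mul _
      simp only [← mul_assoc, inv_mul_cancel₀ hc, one_mul] at this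
      exact h this
    rw [fderiv_zero_of_not_differentiableAt h, fderiv_zero_of_not_differentiableAt h2, smul_zero]

/-- rpow distributes over multiplication by a positive scalar, for any second factor. -/
theorem mul_rpow_pos {s : ℝ} (hs : 0 < s) (d e : ℝ) : (s * d) ^ e = s ^ e * d ^ e := by
  rcases le_or_gt 0 d with hd | hd
  · exact Real.mul_rpow hs.le hd
  · have hsd : s * d < 0 := mul_neg_of_pos_of_neg hs hd
    rw [Real.rpow_def_of_neg hsd, Real.rpow_def_of_neg hd, Real.rpow_def_of_pos hs,
      Real.log_mul (ne_of_gt hs) (ne_of_lt hd), add_mul, Real.exp_add]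
    ring

/-- Inverse of a nonzero scalar multiple of a 3×3 real matrix. -/
theorem smul_inv_matrix (c : ℝ) (hc : c ≠ 0) (M : Matrix (Fin 3) (Fin 3) ℝ) :
    (c • M)⁻¹ = c⁻¹ • M⁻¹ := by
  rw [Matrix.inv_def, Matrix.inv_def, Matrix.det_smul, Matrix.adjugate_smul]
  simp only [Fintype.card_fin, Ring.inverse_eq_inv', smul_smul, mul_inv]
  congr 1
  norm_num
  have key : (c ^ 3 : ℝ)⁻¹ * c ^ 2 = c⁻¹ := by
    field_simp
  rw [mul_right_comm, key]

theorem time_reg {Ω : Set (Fin 3 → ℝ)} {η : ℝ → (Fin 3 → ℝ) → (Fin 3 → ℝ)}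
    (hη : ContDiffOn ℝ 2 (fun p : ℝ × (Fin 3 → ℝ) => η p.1 p.2) (Set.Ici 0 ×ˢ Ω))
    {x : Fin 3 → ℝ} (hx : x ∈ Ω) {t : ℝ} (ht : 0 < t) :
    ∃ V ∈ 𝓝 t, ∃ q : ℝ → (Fin 3 → ℝ),
      (∀ s ∈ V, HasDerivAt (fun u => η u x) (q s) s) ∧ DifferentiableAt ℝ q t := by
  have hmem : ((t, x) : ℝ × (Fin 3 → ℝ)) ∈ Set.Ici (0:ℝ) ×ˢ Ω := ⟨le_of_lt ht, hx⟩
  obtain ⟨u, hu, p, hp⟩ := hη (t, x) hmem 2 le_rfl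
  rw [Set.insert_eq_of_mem hmem] at hu
  obtain ⟨O, hOopen, hOmem, hOsub⟩ := mem_nhdsWithin.1 hu
  set ι : ℝ → ℝ × (Fin 3 → ℝ) := fun s => (s, x) with hι
  have hιc : Continuous ι := continuous_id.prodMk continuous_const
  set V : Set ℝ := (ι ⁻¹' O) ∩ Set.Ioi 0 with hV
  have hVopen : IsOpen V := (hOopen.preimage hιc).inter isOpen_Ioi
  have htV : t ∈ V := ⟨hOmem, ht⟩
  have hVu : ∀ s ∈ V, ι s ∈ u := fun s hs => hOsub ⟨hs.1, ⟨Set.mem_Ici.2 (le_of_lt hs.2), hx⟩⟩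
  have hιd : ∀ s : ℝ, HasDerivAt ι ((1 : ℝ), (0 : Fin 3 → ℝ)) s := fun s =>
    (hasDerivAt_id s).prodMk (hasDerivAt_const s x)
  refine ⟨V, hVopen.mem_nhds htV,
    fun s => (p (ι s) 1) (fun _ => ((1 : ℝ), (0 : Fin 3 → ℝ))), ?_, ?_⟩
  · intro s hs
    have h1 : HasFDerivWithinAt (fun p : ℝ × (Fin 3 → ℝ) => η p.1 p.2)
        (continuousMultilinearCurryFin1 ℝ (ℝ × (Fin 3 → ℝ)) (Fin 3 → ℝ) (p (ι s) 1))
        u (ι s) := hp.hasFDerivWithinAt (by norm_num) (hVu s hs)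
    have h3 := h1.comp_hasDerivWithinAt s ((hιd s).hasDerivWithinAt (s := V)) hVu
    have h4 := h3.hasDerivAt (hVopen.mem_nhds hs)
    have : (continuousMultilinearCurryFin1 ℝ (ℝ × (Fin 3 → ℝ)) (Fin 3 → ℝ) (p (ι s) 1))
        ((1 : ℝ), (0 : Fin 3 → ℝ)) = (p (ι s) 1) (fun _ => ((1 : ℝ), (0 : Fin 3 → ℝ))) := by
      rw [continuousMultilinearCurryFin1_apply]
      congr 1
    rw [this] at h4
    exact h4
  · have h5 := hp.fderivWithin 1 (by norm_num) (ι t) (hVu t htV)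
    have h6 := h5.comp_hasDerivWithinAt t ((hιd t).hasDerivWithinAt (s := V)) hVu
    have h7 : DifferentiableAt ℝ (fun s => p (ι s) 1) t :=
      (h6.hasDerivAt (hVopen.mem_nhds htV)).differentiableAt
    exact ((ContinuousMultilinearMap.apply ℝ _ _
      (fun _ : Fin 1 => ((1 : ℝ), (0 : Fin 3 → ℝ)))).differentiableAt).comp t h7

/-- **Self-similar rescaling of the Lagrangian Euler equations.**  If `η` solves
`w^α ∂_tt η^i + ∂_k (w^{1+α} 𝒜^k_i 𝒥^{-1/α}) = 0`, then the rescaled unknown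
`ζ(τ,x) = e^{-τ} η(e^τ - 1, x)` (with `τ = log(1+t)`) solves
`w^α e^{βτ} (∂_ττ ζ^i + ∂_τ ζ^i) + ∂_k (w^{1+α} 𝒜̃^k_i 𝒥̃^{-1/α}) = 0`, where
`β = 3/α` and `𝒜̃, 𝒥̃` are built from the spatial Jacobian of `ζ`. -/
theorem rescaled_euler_equation
    (α β : ℝ) (hα : 0 < α) (hβ : β = 3 / α)
    (Ω : Set (Fin 3 → ℝ))
    (w : (Fin 3 → ℝ) → ℝ) (hw : ContDiffOn ℝ 1 w Ω) (hwnn : ∀ x ∈ Ω, 0 ≤ w x)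
    (η : ℝ → (Fin 3 → ℝ) → (Fin 3 → ℝ))
    (hη : ContDiffOn ℝ 2 (fun p : ℝ × (Fin 3 → ℝ) => η p.1 p.2) (Set.Ici 0 ×ˢ Ω))
    (hinv : ∀ t ∈ Set.Ici (0:ℝ), ∀ x ∈ Ω, IsUnit (jacM (η t) x))
    (hJpos : ∀ t ∈ Set.Ici (0:ℝ), ∀ x ∈ Ω, 0 < (jacM (η t) x).det)
    (heq : ∀ t ∈ Set.Ioi (0:ℝ), ∀ x ∈ Ω, ∀ i : Fin 3,
      w x ^ α * deriv (fun s => deriv (fun u => η u x i) s) t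
        + ∑ k : Fin 3, pd k
            (fun y => w y ^ (1 + α) * ((jacM (η t) y)⁻¹ k i)
              * ((jacM (η t) y).det) ^ (-1 / α)) x = 0)
    (ζ : ℝ → (Fin 3 → ℝ) → (Fin 3 → ℝ))
    (hζ : ∀ τ x, ζ τ x = Real.exp (-τ) • η (Real.exp τ - 1) x) :
    ∀ τ ∈ Set.Ioi (0:ℝ), ∀ x ∈ Ω, ∀ i : Fin 3,
      w x ^ α * Real.exp (β * τ)
          * (deriv (fun s => deriv (fun u => ζ u x i) s) τ + deriv (fun s => ζ s x i) τ)
        + ∑ k : Fin 3, pd k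
            (fun y => w y ^ (1 + α) * ((jacM (ζ τ) y)⁻¹ k i)
              * ((jacM (ζ τ) y).det) ^ (-1 / α)) x = 0 := by

  intro τ hτ x hx i
  have hτ0 : (0:ℝ) < τ := hτ
  have hexp1 : (1:ℝ) < Real.exp τ := by
    rw [← Real.exp_zero]; exact Real.exp_lt_exp.2 hτ0
  set t : ℝ := Real.exp τ - 1 with htdef
  have ht : 0 < t := by simp only [htdef]; linarith
  -- the scalar component functions
  set fi : ℝ → ℝ := fun u => η u x i with hfi
  have hfd : ∀ s ∈ Ioi (0:ℝ), DifferentiableAt ℝ fi s := by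
    intro s hs
    obtain ⟨V, hV, q, hq, -⟩ := time_reg hη hx hs
    exact ((hasDerivAt_pi.1 (hq s (mem_of_mem_nhds hV))) i).differentiableAt
  set G : ℝ → ℝ := fun s => ζ s x i with hGdef
  have hGeq : G = fun s => Real.exp (-s) * fi (Real.exp s - 1) := by
    funext s
    simp only [hGdef, hζ s x, Pi.smul_apply, smul_eq_mul, hfi]
  have hG' : ∀ s ∈ Ioi (0:ℝ), HasDerivAt G (-G s + deriv fi (Real.exp s - 1)) s := by
    intro s hs
    have hs0 : (0:ℝ) < s := hs
    have hes : (0:ℝ) < Real.exp s - 1 := by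
      have : (1:ℝ) < Real.exp s := by rw [← Real.exp_zero]; exact Real.exp_lt_exp.2 hs0
      linarith
    have h1 : HasDerivAt (fun s => Real.exp (-s)) (-Real.exp (-s)) s := by
      simpa [Function.comp_def] using (Real.hasDerivAt_exp (-s)).comp (h := fun s => -s) s ((hasDerivAt_id s).neg)
    have h2 : HasDerivAt (fun s => Real.exp s - 1) (Real.exp s) s :=
      (Real.hasDerivAt_exp s).sub_const 1
    have h3 : HasDerivAt (fun s => fi (Real.exp s - 1))
        (deriv fi (Real.exp s - 1) * Real.exp s) s :=
      ((hfd _ hes).hasDerivAt).comp (h := fun s => Real.exp s - 1) s h2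
    have h4 := h1.mul h3
    have key : HasDerivAt G (-Real.exp (-s) * fi (Real.exp s - 1)
        + Real.exp (-s) * (deriv fi (Real.exp s - 1) * Real.exp s)) s := by
      rw [hGeq]; exact h4
    convert key using 1
    have hee : Real.exp (-s) * Real.exp s = 1 := by
      rw [← Real.exp_add]; simp
    simp only [hGeq]
    linear_combination (-(deriv fi (Real.exp s - 1))) * hee
  have hderG : deriv G τ = -G τ + deriv fi t := (hG' τ hτ0).deriv
  obtain ⟨V, hV, q, hq, hq'⟩ := time_reg hη hx ht
  set qi : ℝ → ℝ := fun s => q s i with hqi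
  have hqieq : ∀ u ∈ V, deriv fi u = qi u := fun u hu =>
    ((hasDerivAt_pi.1 (hq u hu)) i).deriv
  have hqid : DifferentiableAt ℝ qi t := (differentiableAt_pi.1 hq') i
  set c : ℝ := deriv qi t with hcdef
  have hc : deriv (fun s => deriv fi s) t = c := by
    apply Filter.EventuallyEq.deriv_eq
    exact Filter.eventually_of_mem hV hqieq
  -- eventual formula for deriv G near τ
  have hevmem : ∀ᶠ s in 𝓝 τ, (Real.exp s - 1 ∈ V ∧ s ∈ Ioi (0:ℝ)) := by
    have hcont : ContinuousAt (fun s => Real.exp s - 1) τ :=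
      (Real.continuous_exp.sub continuous_const).continuousAt
    have h1 := hcont.preimage_mem_nhds hV
    have h2 : Ioi (0:ℝ) ∈ 𝓝 τ := isOpen_Ioi.mem_nhds hτ0
    filter_upwards [h1, h2] with s hs1 hs2 using ⟨hs1, hs2⟩
  have hev : deriv G =ᶠ[𝓝 τ] fun s => -G s + qi (Real.exp s - 1) := by
    filter_upwards [hevmem] with s hs
    rw [(hG' s hs.2).deriv, hqieq _ hs.1]
  have hGd : HasDerivAt G (deriv G τ) τ := by
    rw [hderG]; exact hG' τ hτ0
  have h2τ : HasDerivAt (fun s => Real.exp s - 1) (Real.exp τ) τ :=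
    (Real.hasDerivAt_exp τ).sub_const 1
  have hH : HasDerivAt (fun s => -G s + qi (Real.exp s - 1))
      (-(deriv G τ) + c * Real.exp τ) τ :=
    (hGd.neg).add ((hqid.hasDerivAt).comp (h := fun s => Real.exp s - 1) τ h2τ)
  have hdd : deriv (fun s => deriv G s) τ = -(deriv G τ) + c * Real.exp τ := by
    rw [Filter.EventuallyEq.deriv_eq hev]
    exact hH.deriv
  have htime : deriv (fun s => deriv G s) τ + deriv G τ = c * Real.exp τ := by
    rw [hdd]; ring
  -- spatial part
  have hexpne : Real.exp (-τ) ≠ 0 := Real.exp_ne_zero _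
  have hjac : ∀ y, jacM (ζ τ) y = Real.exp (-τ) • jacM (η t) y := by
    intro y
    ext i' j
    have hfuneq : (fun y => ζ τ y i') = fun y => Real.exp (-τ) * η t y i' := by
      funext z; rw [hζ]; simp [htdef]
    simp only [jacM, Matrix.of_apply, Matrix.smul_apply, smul_eq_mul, pd]
    rw [hfuneq, fderiv_const_mul' hexpne]
    simp
  set C : ℝ := Real.exp (β * τ) * Real.exp τ with hCdef
  have hCpos : 0 < C := mul_pos (Real.exp_pos _) (Real.exp_pos _)
  have hscale : ∀ k : Fin 3,
      pd k (fun y => w y ^ (1 + α) * ((jacM (ζ τ) y)⁻¹ k i)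
        * ((jacM (ζ τ) y).det) ^ (-1 / α)) x
      = C * pd k (fun y => w y ^ (1 + α) * ((jacM (η t) y)⁻¹ k i)
        * ((jacM (η t) y).det) ^ (-1 / α)) x := by
    intro k
    have hfun : (fun y => w y ^ (1 + α) * ((jacM (ζ τ) y)⁻¹ k i)
        * ((jacM (ζ τ) y).det) ^ (-1 / α))
        = fun y => C * (w y ^ (1 + α) * ((jacM (η t) y)⁻¹ k i)
        * ((jacM (η t) y).det) ^ (-1 / α)) := by
      funext y
      rw [hjac y, smul_inv_matrix _ hexpne, Matrix.det_smul]
      have hent : ((Real.exp (-τ))⁻¹ • (jacM (η t) y)⁻¹) k i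
          = Real.exp τ * ((jacM (η t) y)⁻¹ k i) := by
        simp [Matrix.smul_apply, smul_eq_mul, Real.exp_neg]
      rw [hent]
      have hdet3 : (Real.exp (-τ)) ^ (Fintype.card (Fin 3)) = Real.exp (-(3 * τ)) := by
        rw [Fintype.card_fin, ← Real.exp_nat_mul]
        norm_num
      rw [hdet3, mul_rpow_pos (Real.exp_pos _)]
      have hpow : Real.exp (-(3 * τ)) ^ (-1 / α) = Real.exp (β * τ) := by
        rw [Real.rpow_def_of_pos (Real.exp_pos _), Real.log_exp]
        congr 1
        rw [hβ]
        field_simp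
      rw [hpow, hCdef]
      ring
    rw [hfun]
    simp only [pd]
    rw [fderiv_const_mul' (ne_of_gt hCpos)]
    simp [pd]
  -- assemble
  have h0 := heq t ht x hx i
  rw [show (fun u => η u x i) = fi from rfl, hc] at h0
  have hsum : (∑ k : Fin 3, pd k
      (fun y => w y ^ (1 + α) * ((jacM (ζ τ) y)⁻¹ k i)
        * ((jacM (ζ τ) y).det) ^ (-1 / α)) x)
      = C * ∑ k : Fin 3, pd k
      (fun y => w y ^ (1 + α) * ((jacM (η t) y)⁻¹ k i)
        * ((jacM (η t) y).det) ^ (-1 / α)) x := by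
    rw [Finset.mul_sum]
    exact Finset.sum_congr rfl fun k _ => hscale k
  rw [hsum, htime, hCdef]
  linear_combination (Real.exp (β * τ) * Real.exp τ) * h0
end

section
/- Let U ⊆ ℝ³ ∖ {0} be open, let Q : U → ℝ^{3×3} be a twice continuously differentiable matrix field (entries Q^k_i), let q > 0, and let W : U → (0,∞) be twice continuously differentiable and radially symmetric, so that ∂_k W = (x_k/r) ∂_r W where r = |x| and ∂_r = Σ_j (x_j/r) ∂_j is the radial directional derivative. Then for each i, j, l ∈ {1,2,3} the following two identities hold on U (with repeated indices k and l summed from 1 to 3): (1) Λ( W^{-q} ∂_k( W^{1+q} Q^k_i ) ) = W^{-(1+q)} ∂_k( W^{2+q} Λ Q^k_i ) + 𝒞^{q+1}_i(Q), where 𝒞^{q+1}_i(Q) = ∂_r W · (x_l/r) ∂̸_{lk} Q^k_i − W ∂_k Q^k_i + (1+q) Q^k_i Λ ∂_k W; (2) ∂̸_{jl}( W^{-q} ∂_k( W^{1+q} Q^k_i ) ) = W^{-q} ∂_k( W^{1+q} ∂̸_{jl} Q^k_i ) + 𝒟^q_i(j,l,Q), where 𝒟^q_i(j,l,Q) = W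 [∂̸_{jl}, ∂_k] Q^k_i + (1+q) Q^k_i ∂̸_{jl} ∂_k W + ∂̸_{jl} W · ∂_k Q^k_i. -/
/-- Partial derivative `∂_j f` of a scalar function on `ℝ³` (as an operator). -/
noncomputable def pdF (j : Fin 3) (f : (Fin 3 → ℝ) → ℝ) : (Fin 3 → ℝ) → ℝ :=
  fun x => fderiv ℝ f x (Pi.single j 1)

/-- Angular derivative `∂̸_ij = x_i ∂_j − x_j ∂_i`. -/
noncomputable def angF (i j : Fin 3) (f : (Fin 3 → ℝ) → ℝ) : (Fin 3 → ℝ) → ℝ :=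
  fun x => x i * pdF j f x - x j * pdF i f x

/-- Radial derivative `Λ = x₁∂₁ + x₂∂₂ + x₃∂₃ = r ∂_r`. -/
noncomputable def radF (f : (Fin 3 → ℝ) → ℝ) : (Fin 3 → ℝ) → ℝ :=
  fun x => ∑ l : Fin 3, x l * pdF l f x

/-- Euclidean radius `r = |x|`. -/
noncomputable def rad (x : Fin 3 → ℝ) : ℝ := Real.sqrt (∑ l : Fin 3, x l ^ 2)

/-- Radial directional derivative `∂_r = Σ_j (x_j/r) ∂_j`. -/
noncomputable def rdir (f : (Fin 3 → ℝ) → ℝ) : (Fin 3 → ℝ) → ℝ :=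
  fun x => ∑ j : Fin 3, (x j / rad x) * pdF j f x

section helpers
open Filter

variable {f g : (Fin 3 → ℝ) → ℝ} {x : Fin 3 → ℝ} {c : ℝ}

lemma pdF_congr (h : f =ᶠ[nhds x] g) (m : Fin 3) : pdF m f x = pdF m g x := by
  unfold pdF; rw [h.fderiv_eq]

lemma pdF_mul (hf : DifferentiableAt ℝ f x) (hg : DifferentiableAt ℝ g x) (m : Fin 3) :
    pdF m (fun y => f y * g y) x = pdF m f x * g x + f x * pdF m g x := by
  unfold pdF
  rw [fderiv_fun_mul hf hg]
  simp only [ContinuousLinearMap.add_apply, ContinuousLinearMap.smul_apply, smul_eq_mul]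
  ring

lemma pdF_add (hf : DifferentiableAt ℝ f x) (hg : DifferentiableAt ℝ g x) (m : Fin 3) :
    pdF m (fun y => f y + g y) x = pdF m f x + pdF m g x := by
  unfold pdF; rw [fderiv_fun_add hf hg]; simp

lemma pdF_sub (hf : DifferentiableAt ℝ f x) (hg : DifferentiableAt ℝ g x) (m : Fin 3) :
    pdF m (fun y => f y - g y) x = pdF m f x - pdF m g x := by
  unfold pdF; rw [fderiv_fun_sub hf hg]; simp

lemma pdF_const_mul (hf : DifferentiableAt ℝ f x) (c : ℝ) (m : Fin 3) :
    pdF m (fun y => c * f y) x = c * pdF m f x := by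
  unfold pdF; rw [fderiv_const_mul hf c]; simp

lemma pdF_sum {F : Fin 3 → (Fin 3 → ℝ) → ℝ} (h : ∀ k, DifferentiableAt ℝ (F k) x) (m : Fin 3) :
    pdF m (fun y => ∑ k : Fin 3, F k y) x = ∑ k : Fin 3, pdF m (F k) x := by
  unfold pdF; rw [fderiv_fun_sum fun k _ => h k]; simp

lemma hasFDerivAt_rpow_comp (hf : DifferentiableAt ℝ f x) (h0 : f x ≠ 0) (c : ℝ) :
    HasFDerivAt (fun y => f y ^ c) ((c * f x ^ (c - 1)) • fderiv ℝ f x) x :=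
  (Real.hasDerivAt_rpow_const (x := f x) (p := c) (Or.inl h0)).comp_hasFDerivAt x hf.hasFDerivAt

lemma pdF_rpow (hf : DifferentiableAt ℝ f x) (h0 : f x ≠ 0) (c : ℝ) (m : Fin 3) :
    pdF m (fun y => f y ^ c) x = c * f x ^ (c - 1) * pdF m f x := by
  unfold pdF
  rw [(hasFDerivAt_rpow_comp hf h0 c).fderiv]
  simp [smul_eq_mul]

lemma diff_rpow (hf : DifferentiableAt ℝ f x) (h0 : f x ≠ 0) (c : ℝ) :
    DifferentiableAt ℝ (fun y => f y ^ c) x :=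
  (hasFDerivAt_rpow_comp hf h0 c).differentiableAt

lemma hasFDerivAt_proj (l : Fin 3) (x : Fin 3 → ℝ) :
    HasFDerivAt (fun y : Fin 3 → ℝ => y l)
      (ContinuousLinearMap.proj (R := ℝ) (φ := fun _ : Fin 3 => ℝ) l) x :=
  (ContinuousLinearMap.proj (R := ℝ) (φ := fun _ : Fin 3 => ℝ) l).hasFDerivAt

lemma diff_proj (l : Fin 3) : DifferentiableAt ℝ (fun y : Fin 3 → ℝ => y l) x :=
  (hasFDerivAt_proj l x).differentiableAt

lemma pdF_proj (l m : Fin 3) :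
    pdF m (fun y : Fin 3 → ℝ => y l) x = (Pi.single m (1:ℝ) : Fin 3 → ℝ) l := by
  unfold pdF
  rw [(hasFDerivAt_proj l x).fderiv]
  simp

lemma pdF_coord_mul (hg : DifferentiableAt ℝ g x) (l m : Fin 3) :
    pdF m (fun y => y l * g y) x
      = (Pi.single m (1:ℝ) : Fin 3 → ℝ) l * g x + x l * pdF m g x := by
  rw [pdF_mul (diff_proj l) hg, pdF_proj]

lemma diff_pdF (hf : ContDiffAt ℝ 2 f x) (k : Fin 3) : DifferentiableAt ℝ (pdF k f) x := by
  have h : DifferentiableAt ℝ (fderiv ℝ f) x :=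
    (hf.fderiv_right (m := 1) (by norm_num)).differentiableAt one_ne_zero
  exact ((ContinuousLinearMap.apply ℝ ℝ (Pi.single k (1:ℝ))).differentiable.differentiableAt).comp x h

lemma pdF_symm (hf : ContDiffAt ℝ 2 f x) (m k : Fin 3) :
    pdF m (pdF k f) x = pdF k (pdF m f) x := by
  have h : DifferentiableAt ℝ (fderiv ℝ f) x :=
    (hf.fderiv_right (m := 1) (by norm_num)).differentiableAt one_ne_zero
  have key : ∀ v w : Fin 3 → ℝ,
      fderiv ℝ (fun y => fderiv ℝ f y v) x w = fderiv ℝ (fderiv ℝ f) x w v := by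
    intro v w
    rw [fderiv_clm_apply h (differentiableAt_const v)]
    simp
  have hs := hf.isSymmSndFDerivAt (by norm_num)
  unfold pdF
  rw [key, key, hs]

end helpers

/-- **Commutation through weighted divergences** (Lemma on `𝒞` and `𝒟` remainders):
for a radially symmetric weight `W > 0` and a `C²` matrix field `Q` on an open
`U ⊆ ℝ³ ∖ {0}`, the radial and angular derivatives of `W^{-q} ∂_k (W^{1+q} Q^k_i)`
equal the corresponding weighted divergences of `ΛQ`, `∂̸Q` plus the explicit
lower-order remainders `𝒞^{q+1}_i(Q)` and `𝒟^q_i(j,l,Q)`. -/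
theorem commutators_instead_of_expansion
    (U : Set (Fin 3 → ℝ)) (hU : IsOpen U) (hU0 : U ⊆ {(0 : Fin 3 → ℝ)}ᶜ)
    (Q : (Fin 3 → ℝ) → Matrix (Fin 3) (Fin 3) ℝ)
    (hQ : ∀ k i : Fin 3, ContDiffOn ℝ 2 (fun x => Q x k i) U)
    (q : ℝ) (hq : 0 < q)
    (W : (Fin 3 → ℝ) → ℝ) (hW : ContDiffOn ℝ 2 W U) (hWpos : ∀ x ∈ U, 0 < W x)
    (hWrad : ∀ x ∈ U, ∀ k : Fin 3, pdF k W x = (x k / rad x) * rdir W x) :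
    ∀ x ∈ U, ∀ i j l : Fin 3,
      (radF (fun y => W y ^ (-q) *
            ∑ k : Fin 3, pdF k (fun z => W z ^ (1 + q) * Q z k i) y) x
        = W x ^ (-(1 + q)) *
            (∑ k : Fin 3, pdF k
              (fun y => W y ^ (2 + q) * radF (fun z => Q z k i) y) x)
          + (rdir W x *
              ∑ l' : Fin 3, ∑ k : Fin 3, (x l' / rad x) * angF l' k (fun z => Q z k i) x
            - W x * ∑ k : Fin 3, pdF k (fun z => Q z k i) x
            + (1 + q) * ∑ k : Fin 3, Q x k i * radF (pdF k W) x)) ∧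
      (angF j l (fun y => W y ^ (-q) *
            ∑ k : Fin 3, pdF k (fun z => W z ^ (1 + q) * Q z k i) y) x
        = W x ^ (-q) *
            (∑ k : Fin 3, pdF k
              (fun y => W y ^ (1 + q) * angF j l (fun z => Q z k i) y) x)
          + (W x * ∑ k : Fin 3,
                (angF j l (pdF k (fun z => Q z k i)) x
                  - pdF k (angF j l (fun z => Q z k i)) x)
            + (1 + q) * ∑ k : Fin 3, Q x k i * angF j l (pdF k W) x
            + angF j l W x * ∑ k : Fin 3, pdF k (fun z => Q z k i) x)) := by
  intro x hx i j l
  have hxmem : U ∈ nhds x := hU.mem_nhds hx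
  have hWx : 0 < W x := hWpos x hx
  have hWxne : W x ≠ 0 := ne_of_gt hWx
  have hxne : x ≠ 0 := by have := hU0 hx; simpa using this
  have hradpos : 0 < rad x := by
    have h1 : 0 < ∑ l' : Fin 3, x l' ^ 2 := by
      rcases Function.ne_iff.1 hxne with ⟨a, ha⟩
      exact Finset.sum_pos' (fun i _ => sq_nonneg _)
        ⟨a, Finset.mem_univ a, by
          have ha' : x a ≠ 0 := by simpa using ha
          positivity⟩
    exact Real.sqrt_pos.2 h1
  have hrne : rad x ≠ 0 := ne_of_gt hradpos
  have hWcx : ContDiffAt ℝ 2 W x := hW.contDiffAt hxmem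
  have hQcx : ∀ k : Fin 3, ContDiffAt ℝ 2 (fun z => Q z k i) x :=
    fun k => (hQ k i).contDiffAt hxmem
  have hWdx : DifferentiableAt ℝ W x := hWcx.differentiableAt two_ne_zero
  have hQdx : ∀ k : Fin 3, DifferentiableAt ℝ (fun z => Q z k i) x :=
    fun k => (hQcx k).differentiableAt two_ne_zero
  have hdWd : ∀ k : Fin 3, DifferentiableAt ℝ (pdF k W) x := fun k => diff_pdF hWcx k
  have hdQd : ∀ m k : Fin 3, DifferentiableAt ℝ (pdF m (fun z => Q z k i)) x :=
    fun m k => diff_pdF (hQcx k) m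
  -- Step 1 : pointwise simplification of the weighted divergence on U
  have key1 : ∀ y ∈ U,
      W y ^ (-q) * ∑ k : Fin 3, pdF k (fun z => W z ^ (1 + q) * Q z k i) y
        = (1 + q) * ∑ k : Fin 3, pdF k W y * Q y k i
          + W y * ∑ k : Fin 3, pdF k (fun z => Q z k i) y := by
    intro y hy
    have hWy : 0 < W y := hWpos y hy
    have hWyne : W y ≠ 0 := ne_of_gt hWy
    have hWdy : DifferentiableAt ℝ W y :=
      (hW.contDiffAt (hU.mem_nhds hy)).differentiableAt two_ne_zero
    have hQdy : ∀ k : Fin 3, DifferentiableAt ℝ (fun z => Q z k i) y :=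
      fun k => ((hQ k i).contDiffAt (hU.mem_nhds hy)).differentiableAt two_ne_zero
    have hk : ∀ k : Fin 3, pdF k (fun z => W z ^ (1 + q) * Q z k i) y
        = ((1 + q) * W y ^ ((1 + q) - 1) * pdF k W y) * Q y k i
          + W y ^ (1 + q) * pdF k (fun z => Q z k i) y := by
      intro k
      rw [pdF_mul (diff_rpow hWdy hWyne (1 + q)) (hQdy k) k,
        pdF_rpow hWdy hWyne (1 + q) k]
    have e3 : W y ^ (-q) * W y ^ ((1 + q) - 1) = 1 := by
      rw [← Real.rpow_add hWy, show -q + ((1 + q) - 1) = (0:ℝ) by ring, Real.rpow_zero]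
    have e4 : W y ^ (-q) * W y ^ (1 + q) = W y := by
      rw [← Real.rpow_add hWy]
      have : -q + (1 + q) = (1:ℝ) := by ring
      rw [this, Real.rpow_one]
    rw [Finset.mul_sum]
    calc ∑ k : Fin 3, W y ^ (-q) * pdF k (fun z => W z ^ (1 + q) * Q z k i) y
        = ∑ k : Fin 3, ((1 + q) * (pdF k W y * Q y k i)
            + W y * pdF k (fun z => Q z k i) y) := by
          refine Finset.sum_congr rfl fun k _ => ?_
          rw [hk k]
          linear_combination ((1 + q) * pdF k W y * Q y k i) * e3
            + (pdF k (fun z => Q z k i) y) * e4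
      _ = (1 + q) * ∑ k : Fin 3, pdF k W y * Q y k i
            + W y * ∑ k : Fin 3, pdF k (fun z => Q z k i) y := by
          rw [Finset.sum_add_distrib, ← Finset.mul_sum, ← Finset.mul_sum]
  have hEE : (fun y => W y ^ (-q) *
        ∑ k : Fin 3, pdF k (fun z => W z ^ (1 + q) * Q z k i) y)
      =ᶠ[nhds x] (fun y => (1 + q) * ∑ k : Fin 3, pdF k W y * Q y k i
          + W y * ∑ k : Fin 3, pdF k (fun z => Q z k i) y) :=
    Filter.eventuallyEq_of_mem hxmem fun y hy => key1 y hy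
  -- derivatives of the simplified expression
  have d1 : ∀ k : Fin 3, DifferentiableAt ℝ (fun y => pdF k W y * Q y k i) x :=
    fun k => (hdWd k).mul (hQdx k)
  have dsum1 : DifferentiableAt ℝ (fun y => ∑ k : Fin 3, pdF k W y * Q y k i) x :=
    DifferentiableAt.fun_sum fun k _ => d1 k
  have dsum2 : DifferentiableAt ℝ (fun y => ∑ k : Fin 3, pdF k (fun z => Q z k i) y) x :=
    DifferentiableAt.fun_sum fun k _ => hdQd k k
  have h1 : ∀ m : Fin 3,
      pdF m (fun y => W y ^ (-q) *
          ∑ k : Fin 3, pdF k (fun z => W z ^ (1 + q) * Q z k i) y) x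
        = (1 + q) * ∑ k : Fin 3, (pdF m (pdF k W) x * Q x k i
              + pdF k W x * pdF m (fun z => Q z k i) x)
          + (pdF m W x * ∑ k : Fin 3, pdF k (fun z => Q z k i) x
              + W x * ∑ k : Fin 3, pdF m (pdF k (fun z => Q z k i)) x) := by
    intro m
    rw [pdF_congr hEE m]
    rw [pdF_add (dsum1.const_mul (1 + q)) (hWdx.fun_mul dsum2) m]
    rw [pdF_const_mul dsum1 (1 + q) m]
    rw [pdF_mul hWdx dsum2 m]
    rw [pdF_sum d1 m, pdF_sum (fun k => hdQd k k) m]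
    have hper : ∀ k : Fin 3, pdF m (fun y => pdF k W y * Q y k i) x
        = pdF m (pdF k W) x * Q x k i + pdF k W x * pdF m (fun z => Q z k i) x :=
      fun k => pdF_mul (hdWd k) (hQdx k) m
    simp only [hper]
  -- the weighted divergence of the radial derivative
  have h2 : ∀ k : Fin 3, W x ^ (-(1 + q)) *
      pdF k (fun y => W y ^ (2 + q) * ∑ l' : Fin 3, y l' * pdF l' (fun z => Q z k i) y) x
        = (2 + q) * pdF k W x * (∑ l' : Fin 3, x l' * pdF l' (fun z => Q z k i) x)
          + W x * (pdF k (fun z => Q z k i) x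
            + ∑ l' : Fin 3, x l' * pdF l' (pdF k (fun z => Q z k i)) x) := by
    intro k
    have dG : DifferentiableAt ℝ (fun y => ∑ l' : Fin 3, y l' * pdF l' (fun z => Q z k i) y) x :=
      DifferentiableAt.fun_sum fun l' _ => (diff_proj l').mul (hdQd l' k)
    rw [pdF_mul (diff_rpow hWdx hWxne (2 + q)) dG k,
      pdF_rpow hWdx hWxne (2 + q) k,
      pdF_sum (fun l' => (diff_proj l').fun_mul (hdQd l' k)) k]
    have hper : ∀ l' : Fin 3, pdF k (fun y => y l' * pdF l' (fun z => Q z k i) y) x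
        = (Pi.single k (1:ℝ) : Fin 3 → ℝ) l' * pdF l' (fun z => Q z k i) x
          + x l' * pdF l' (pdF k (fun z => Q z k i)) x := by
      intro l'
      rw [pdF_coord_mul (hdQd l' k) l' k, pdF_symm (hQcx k) k l']
    simp only [hper]
    rw [Finset.sum_add_distrib]
    have hsingle : ∑ l' : Fin 3,
        (Pi.single k (1:ℝ) : Fin 3 → ℝ) l' * pdF l' (fun z => Q z k i) x
          = pdF k (fun z => Q z k i) x := by
      simp [Pi.single_apply, ite_mul]
    rw [hsingle]
    have e1 : W x ^ (-(1 + q)) * W x ^ ((2 + q) - 1) = 1 := by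
      rw [← Real.rpow_add hWx, show -(1 + q) + ((2 + q) - 1) = (0:ℝ) by ring, Real.rpow_zero]
    have e2 : W x ^ (-(1 + q)) * W x ^ (2 + q) = W x := by
      rw [← Real.rpow_add hWx]
      have : -(1 + q) + (2 + q) = (1:ℝ) := by ring
      rw [this, Real.rpow_one]
    linear_combination ((2 + q) * pdF k W x * (∑ l' : Fin 3, x l' * pdF l' (fun z => Q z k i) x)) * e1
      + (pdF k (fun z => Q z k i) x + ∑ l' : Fin 3, x l' * pdF l' (pdF k (fun z => Q z k i)) x) * e2
  -- the weighted divergence of the angular derivative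
  have h3 : ∀ k : Fin 3, W x ^ (-q) *
      pdF k (fun y => W y ^ (1 + q) *
        (y j * pdF l (fun z => Q z k i) y - y l * pdF j (fun z => Q z k i) y)) x
        = (1 + q) * pdF k W x *
            (x j * pdF l (fun z => Q z k i) x - x l * pdF j (fun z => Q z k i) x)
          + W x * pdF k (fun y => y j * pdF l (fun z => Q z k i) y
              - y l * pdF j (fun z => Q z k i) y) x := by
    intro k
    have dG : DifferentiableAt ℝ (fun y => y j * pdF l (fun z => Q z k i) y
        - y l * pdF j (fun z => Q z k i) y) x :=
      ((diff_proj j).mul (hdQd l k)).sub ((diff_proj l).mul (hdQd j k))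
    rw [pdF_mul (diff_rpow hWdx hWxne (1 + q)) dG k, pdF_rpow hWdx hWxne (1 + q) k]
    have e3 : W x ^ (-q) * W x ^ ((1 + q) - 1) = 1 := by
      rw [← Real.rpow_add hWx, show -q + ((1 + q) - 1) = (0:ℝ) by ring, Real.rpow_zero]
    have e4 : W x ^ (-q) * W x ^ (1 + q) = W x := by
      rw [← Real.rpow_add hWx]
      have : -q + (1 + q) = (1:ℝ) := by ring
      rw [this, Real.rpow_one]
    linear_combination ((1 + q) * pdF k W x *
        (x j * pdF l (fun z => Q z k i) x - x l * pdF j (fun z => Q z k i) x)) * e3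
      + (pdF k (fun y => y j * pdF l (fun z => Q z k i) y
          - y l * pdF j (fun z => Q z k i) y) x) * e4
  have angF_def : ∀ (a b : Fin 3) (f : (Fin 3 → ℝ) → ℝ),
      angF a b f = fun y => y a * pdF b f y - y b * pdF a f y := fun _ _ _ => rfl
  constructor
  · -- radial identity
    simp only [radF, angF_def]
    simp only [h1]
    rw [Finset.mul_sum Finset.univ _ (W x ^ (-(1 + q)))]
    simp only [h2]
    simp only [hWrad x hx]
    simp only [Fin.sum_univ_three]
    field_simp
    ring
  · -- angular identity
    simp only [angF_def, radF]
    simp only [h1]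
    rw [Finset.mul_sum Finset.univ _ (W x ^ (-q))]
    simp only [h3]
    simp only [hWrad x hx]
    simp only [Fin.sum_univ_three]
    field_simp
    ring
end

section
/- For β > 0 and τ > 0 define: G₁(β,τ) = τ e^{−2τ} if 2σ₁(β) > 2+σ₂(β), τ² e^{−2τ} if 2σ₁(β) = 2+σ₂(β), and τ e^{(σ₂(β)−2σ₁(β))τ} if 2σ₁(β) < 2+σ₂(β); G₂(β,τ) = τ² e^{−2τ} if σ₁(β) = 2+σ₂(β) and τ e^{(σ₂(β)−σ₁(β))τ} if σ₁(β) < 2+σ₂(β); G₃(β,τ) = τ e^{−2τ} if 2β > 2+σ₂(β), τ² e^{−2τ} if 2β = 2+σ₂(β), and τ e^{(σ₂(β)−2β)τ} if 2β < 2+σ₂(β); G₄(β,τ) = τ e^{−2τ} if σ₁(β) > 1, τ² e^{−2τ} if σ₁(β) = 1, and τ e^{−2σ₁(β)τ} if σ₁(β) < 1; G₅(β,τ) = τ² e^{−2τ} if σ₁(β) = 2 and τ e^{−σ₁(β)τ} if σ₁(β) < 2; G₆(β,τ) = τ e^{−2τ} if β > 1, τ² e^{−2τ} if β = 1, and τ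 e^{−2βτ} if β < 1. For i = 1,…,6 define G̃_i(β,τ) = ∫₀^τ e^{σ₁(β)τ'/2} G_i(β,τ') dτ'. Then for every β > 0 and every i ∈ {1,…,6}, the function τ ↦ e^{−σ₂(β)τ} G̃_i(β,τ) is bounded on (0,∞), and for every β > 2 it is integrable on (0,∞). -/
open MeasureTheory

/-- `σ₁(β) = β` for `β ≤ 2` and `= 2` for `β > 2`. -/
noncomputable def sigma1 (β : ℝ) : ℝ := if β ≤ 2 then β else 2

/-- `σ₂(β) = 0` for `β ≤ 2` and `= β − 2` for `β > 2`. -/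
noncomputable def sigma2 (β : ℝ) : ℝ := if β ≤ 2 then 0 else β - 2

noncomputable def G1 (β τ : ℝ) : ℝ :=
  if 2 + sigma2 β < 2 * sigma1 β then τ * Real.exp (-2 * τ)
  else if 2 * sigma1 β = 2 + sigma2 β then τ ^ 2 * Real.exp (-2 * τ)
  else τ * Real.exp ((sigma2 β - 2 * sigma1 β) * τ)

noncomputable def G2 (β τ : ℝ) : ℝ :=
  if sigma1 β = 2 + sigma2 β then τ ^ 2 * Real.exp (-2 * τ)
  else τ * Real.exp ((sigma2 β - sigma1 β) * τ)

noncomputable def G3 (β τ : ℝ) : ℝ :=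
  if 2 + sigma2 β < 2 * β then τ * Real.exp (-2 * τ)
  else if 2 * β = 2 + sigma2 β then τ ^ 2 * Real.exp (-2 * τ)
  else τ * Real.exp ((sigma2 β - 2 * β) * τ)

noncomputable def G4 (β τ : ℝ) : ℝ :=
  if 1 < sigma1 β then τ * Real.exp (-2 * τ)
  else if sigma1 β = 1 then τ ^ 2 * Real.exp (-2 * τ)
  else τ * Real.exp (-2 * sigma1 β * τ)

noncomputable def G5 (β τ : ℝ) : ℝ :=
  if sigma1 β = 2 then τ ^ 2 * Real.exp (-2 * τ)
  else τ * Real.exp (-(sigma1 β) * τ)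

noncomputable def G6 (β τ : ℝ) : ℝ :=
  if 1 < β then τ * Real.exp (-2 * τ)
  else if β = 1 then τ ^ 2 * Real.exp (-2 * τ)
  else τ * Real.exp (-2 * β * τ)

/-- The vector `(G₁, …, G₆)`. -/
noncomputable def Gvec : Fin 6 → ℝ → ℝ → ℝ := ![G1, G2, G3, G4, G5, G6]

/-- `G̃ᵢ(β,τ) = ∫₀^τ e^{σ₁(β)τ'/2} Gᵢ(β,τ') dτ'`. -/
noncomputable def Gtilde (i : Fin 6) (β τ : ℝ) : ℝ :=
  ∫ t in (0:ℝ)..τ, Real.exp (sigma1 β * t / 2) * Gvec i β t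

lemma pow_mul_exp_le (n : ℕ) {d t : ℝ} (hd : 0 < d) (ht : 0 ≤ t) :
    t ^ n * Real.exp (-(d * t)) ≤ n.factorial / d ^ n := by
  have h1 : (d * t) ^ n ≤ n.factorial * Real.exp (d * t) := by
    have h := Real.pow_div_factorial_le_exp (d*t) (mul_nonneg hd.le ht) n
    have hf : (0:ℝ) < n.factorial := by positivity
    calc (d * t) ^ n = (d * t) ^ n / n.factorial * n.factorial := by field_simp
      _ ≤ Real.exp (d * t) * n.factorial := mul_le_mul_of_nonneg_right h hf.le
      _ = n.factorial * Real.exp (d * t) := mul_comm _ _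
  rw [le_div_iff₀ (pow_pos hd n)]
  have h2 : t ^ n * Real.exp (-(d * t)) * d ^ n = (d * t) ^ n * Real.exp (-(d * t)) := by
    rw [mul_pow]; ring
  rw [h2]
  calc (d * t) ^ n * Real.exp (-(d * t))
      ≤ n.factorial * Real.exp (d * t) * Real.exp (-(d * t)) :=
        mul_le_mul_of_nonneg_right h1 (Real.exp_pos _).le
    _ = n.factorial := by rw [mul_assoc, ← Real.exp_add]; simp

lemma integrable_pow_mul_exp (n : ℕ) {a : ℝ} (ha : a < 0) :
    IntegrableOn (fun t : ℝ => t ^ n * Real.exp (a * t)) (Set.Ioi 0) := by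
  have h := integrableOn_rpow_mul_exp_neg_mul_rpow (s := (n:ℝ)) (p := 1)
    (by exact_mod_cast neg_one_lt_zero.trans_le (Nat.cast_nonneg n)) one_pos
    (b := -a) (by linarith)
  refine h.congr_fun (fun x hx => ?_) measurableSet_Ioi
  have hx0 : (0:ℝ) ≤ x := (Set.mem_Ioi.mp hx).le
  beta_reduce
  rw [Real.rpow_one, Real.rpow_natCast, neg_neg]

lemma master (k : ℕ) {a c : ℝ} (hc : 0 ≤ c) (hac : a < c) :
    (∃ C : ℝ, ∀ τ ∈ Set.Ioi (0:ℝ),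
      |Real.exp (-c * τ) * ∫ t in (0:ℝ)..τ, t ^ k * Real.exp (a * t)| ≤ C) ∧
    (0 < c → IntegrableOn
      (fun τ => Real.exp (-c * τ) * ∫ t in (0:ℝ)..τ, t ^ k * Real.exp (a * t))
      (Set.Ioi 0) volume) := by
  have contg : Continuous fun t : ℝ => t ^ k * Real.exp (a * t) := by continuity
  have hint : ∀ u v : ℝ, IntervalIntegrable (fun t : ℝ => t ^ k * Real.exp (a * t)) volume u v :=
    fun u v => contg.intervalIntegrable u v
  have hF : Continuous fun τ : ℝ =>
      Real.exp (-c * τ) * ∫ t in (0:ℝ)..τ, t ^ k * Real.exp (a * t) :=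
    (Real.continuous_exp.comp (by continuity)).mul (intervalIntegral.continuous_primitive hint 0)
  rcases lt_or_ge a 0 with ha | ha
  · -- a < 0
    set C := ∫ t in Set.Ioi (0:ℝ), t ^ k * Real.exp (a * t) with hCdef
    have hCnonneg : 0 ≤ C :=
      setIntegral_nonneg measurableSet_Ioi fun x hx => by
        have : (0:ℝ) ≤ x := le_of_lt hx
        positivity
    have hbound : ∀ τ ∈ Set.Ioi (0:ℝ),
        |Real.exp (-c * τ) * ∫ t in (0:ℝ)..τ, t ^ k * Real.exp (a * t)|
          ≤ C * Real.exp (-c * τ) := by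
      intro τ hτ
      have hτ0 : (0:ℝ) < τ := hτ
      have hInn : 0 ≤ ∫ t in (0:ℝ)..τ, t ^ k * Real.exp (a * t) :=
        intervalIntegral.integral_nonneg hτ0.le fun x hx => by
          have : (0:ℝ) ≤ x := hx.1
          positivity
      have hIle : (∫ t in (0:ℝ)..τ, t ^ k * Real.exp (a * t)) ≤ C := by
        rw [intervalIntegral.integral_of_le hτ0.le]
        refine setIntegral_mono_set (integrable_pow_mul_exp k ha)
          (ae_restrict_of_forall_mem measurableSet_Ioi fun x hx => by
            have : (0:ℝ) ≤ x := (Set.mem_Ioi.mp hx).le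
            positivity)
          (HasSubset.Subset.eventuallyLE Set.Ioc_subset_Ioi_self)
      rw [abs_of_nonneg (mul_nonneg (Real.exp_pos _).le hInn), mul_comm]
      exact mul_le_mul_of_nonneg_right hIle (Real.exp_pos _).le
    constructor
    · refine ⟨C, fun τ hτ => (hbound τ hτ).trans ?_⟩
      have : Real.exp (-c * τ) ≤ 1 := Real.exp_le_one_iff.mpr (by
        have hτ0 : (0:ℝ) < τ := hτ
        nlinarith)
      nlinarith [hbound τ hτ, abs_nonneg (Real.exp (-c * τ) * ∫ t in (0:ℝ)..τ, t ^ k * Real.exp (a * t))]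
    · intro hc0
      exact Integrable.mono' ((exp_neg_integrableOn_Ioi 0 hc0).const_mul C)
        hF.aestronglyMeasurable.restrict
        (ae_restrict_of_forall_mem measurableSet_Ioi hbound)
  · -- 0 ≤ a, so 0 < c
    have hc0 : 0 < c := lt_of_le_of_lt ha hac
    have hbound : ∀ τ ∈ Set.Ioi (0:ℝ),
        |Real.exp (-c * τ) * ∫ t in (0:ℝ)..τ, t ^ k * Real.exp (a * t)|
          ≤ τ ^ (k+1) * Real.exp ((a - c) * τ) := by
      intro τ hτ
      have hτ0 : (0:ℝ) < τ := hτ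
      have hInn : 0 ≤ ∫ t in (0:ℝ)..τ, t ^ k * Real.exp (a * t) :=
        intervalIntegral.integral_nonneg hτ0.le fun x hx => by
          have : (0:ℝ) ≤ x := hx.1
          positivity
      have hIle : (∫ t in (0:ℝ)..τ, t ^ k * Real.exp (a * t))
          ≤ τ ^ (k+1) * Real.exp (a * τ) := by
        have h1 : (∫ t in (0:ℝ)..τ, t ^ k * Real.exp (a * t))
            ≤ ∫ _t in (0:ℝ)..τ, τ ^ k * Real.exp (a * τ) := by
          refine intervalIntegral.integral_mono_on hτ0.le (hint 0 τ)
            intervalIntegrable_const fun x hx => ?_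
          have hx0 : (0:ℝ) ≤ x := hx.1
          have hx1 : x ≤ τ := hx.2
          have := Real.exp_le_exp.mpr (mul_le_mul_of_nonneg_left hx1 ha)
          have hp : x ^ k ≤ τ ^ k := pow_le_pow_left₀ hx0 hx1 k
          have he : Real.exp (a * x) ≤ Real.exp (a * τ) := this
          nlinarith [Real.exp_pos (a * x), pow_nonneg hx0 k]
        rw [intervalIntegral.integral_const] at h1
        calc (∫ t in (0:ℝ)..τ, t ^ k * Real.exp (a * t))
            ≤ (τ - 0) • (τ ^ k * Real.exp (a * τ)) := h1
          _ = τ ^ (k+1) * Real.exp (a * τ) := by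
              simp [smul_eq_mul]; ring
      rw [abs_of_nonneg (mul_nonneg (Real.exp_pos _).le hInn)]
      calc Real.exp (-c * τ) * ∫ t in (0:ℝ)..τ, t ^ k * Real.exp (a * t)
          ≤ Real.exp (-c * τ) * (τ ^ (k+1) * Real.exp (a * τ)) :=
            mul_le_mul_of_nonneg_left hIle (Real.exp_pos _).le
        _ = τ ^ (k+1) * Real.exp ((a - c) * τ) := by
            rw [mul_left_comm, ← Real.exp_add]; congr 2; ring
    constructor
    · refine ⟨(k+1).factorial / (c - a) ^ (k+1), fun τ hτ => (hbound τ hτ).trans ?_⟩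
      have hτ0 : (0:ℝ) < τ := hτ
      have := pow_mul_exp_le (k+1) (d := c - a) (t := τ) (by linarith) hτ0.le
      calc τ ^ (k+1) * Real.exp ((a - c) * τ)
          = τ ^ (k+1) * Real.exp (-((c - a) * τ)) := by congr 2; ring
        _ ≤ (k+1).factorial / (c - a) ^ (k+1) := this
    · intro _
      refine Integrable.mono' (integrable_pow_mul_exp (k+1) (a := a - c) (by linarith))
        hF.aestronglyMeasurable.restrict
        (ae_restrict_of_forall_mem measurableSet_Ioi hbound)

lemma exp_mul_aux1 (s b t : ℝ) :
    Real.exp (s * t / 2) * (t * Real.exp (b * t)) = t ^ 1 * Real.exp ((s / 2 + b) * t) := by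
  rw [mul_left_comm, ← Real.exp_add]
  have h : s * t / 2 + b * t = (s / 2 + b) * t := by ring
  rw [h, pow_one]

lemma exp_mul_aux2 (s b t : ℝ) :
    Real.exp (s * t / 2) * (t ^ 2 * Real.exp (b * t)) = t ^ 2 * Real.exp ((s / 2 + b) * t) := by
  rw [mul_left_comm, ← Real.exp_add]
  have h : s * t / 2 + b * t = (s / 2 + b) * t := by ring
  rw [h]

lemma sigma_facts (β : ℝ) (hβ : 0 < β) :
    0 < sigma1 β ∧ sigma1 β ≤ 2 ∧ 0 ≤ sigma2 β ∧ sigma1 β + sigma2 β = β := by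
  unfold sigma1 sigma2
  split_ifs with h
  · exact ⟨hβ, h, le_refl 0, by ring⟩
  · push_neg at h
    exact ⟨by norm_num, le_refl 2, by linarith, by ring⟩

lemma rep1 (β : ℝ) (hβ : 0 < β) : ∃ (k : ℕ) (a : ℝ), a < sigma2 β ∧
    ∀ t : ℝ, Real.exp (sigma1 β * t / 2) * G1 β t = t ^ k * Real.exp (a * t) := by
  obtain ⟨h1, h2, h3, h4⟩ := sigma_facts β hβ
  unfold G1; split_ifs with hA hB
  · exact ⟨1, sigma1 β / 2 + (-2), by linarith, fun t => exp_mul_aux1 _ _ t⟩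
  · exact ⟨2, sigma1 β / 2 + (-2), by linarith, fun t => exp_mul_aux2 _ _ t⟩
  · exact ⟨1, sigma1 β / 2 + (sigma2 β - 2 * sigma1 β), by linarith, fun t => exp_mul_aux1 _ _ t⟩

lemma rep2 (β : ℝ) (hβ : 0 < β) : ∃ (k : ℕ) (a : ℝ), a < sigma2 β ∧
    ∀ t : ℝ, Real.exp (sigma1 β * t / 2) * G2 β t = t ^ k * Real.exp (a * t) := by
  obtain ⟨h1, h2, h3, h4⟩ := sigma_facts β hβ
  unfold G2; split_ifs with hA
  · exact ⟨2, sigma1 β / 2 + (-2), by linarith, fun t => exp_mul_aux2 _ _ t⟩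
  · exact ⟨1, sigma1 β / 2 + (sigma2 β - sigma1 β), by linarith, fun t => exp_mul_aux1 _ _ t⟩

lemma rep3 (β : ℝ) (hβ : 0 < β) : ∃ (k : ℕ) (a : ℝ), a < sigma2 β ∧
    ∀ t : ℝ, Real.exp (sigma1 β * t / 2) * G3 β t = t ^ k * Real.exp (a * t) := by
  obtain ⟨h1, h2, h3, h4⟩ := sigma_facts β hβ
  unfold G3; split_ifs with hA hB
  · exact ⟨1, sigma1 β / 2 + (-2), by linarith, fun t => exp_mul_aux1 _ _ t⟩
  · exact ⟨2, sigma1 β / 2 + (-2), by linarith, fun t => exp_mul_aux2 _ _ t⟩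
  · exact ⟨1, sigma1 β / 2 + (sigma2 β - 2 * β), by linarith, fun t => exp_mul_aux1 _ _ t⟩

lemma rep4 (β : ℝ) (hβ : 0 < β) : ∃ (k : ℕ) (a : ℝ), a < sigma2 β ∧
    ∀ t : ℝ, Real.exp (sigma1 β * t / 2) * G4 β t = t ^ k * Real.exp (a * t) := by
  obtain ⟨h1, h2, h3, h4⟩ := sigma_facts β hβ
  unfold G4; split_ifs with hA hB
  · exact ⟨1, sigma1 β / 2 + (-2), by linarith, fun t => exp_mul_aux1 _ _ t⟩
  · exact ⟨2, sigma1 β / 2 + (-2), by linarith, fun t => exp_mul_aux2 _ _ t⟩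
  · exact ⟨1, sigma1 β / 2 + (-2 * sigma1 β), by linarith, fun t => exp_mul_aux1 _ _ t⟩

lemma rep5 (β : ℝ) (hβ : 0 < β) : ∃ (k : ℕ) (a : ℝ), a < sigma2 β ∧
    ∀ t : ℝ, Real.exp (sigma1 β * t / 2) * G5 β t = t ^ k * Real.exp (a * t) := by
  obtain ⟨h1, h2, h3, h4⟩ := sigma_facts β hβ
  unfold G5; split_ifs with hA
  · exact ⟨2, sigma1 β / 2 + (-2), by linarith, fun t => exp_mul_aux2 _ _ t⟩
  · exact ⟨1, sigma1 β / 2 + (-(sigma1 β)), by linarith, fun t => exp_mul_aux1 _ _ t⟩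

lemma rep6 (β : ℝ) (hβ : 0 < β) : ∃ (k : ℕ) (a : ℝ), a < sigma2 β ∧
    ∀ t : ℝ, Real.exp (sigma1 β * t / 2) * G6 β t = t ^ k * Real.exp (a * t) := by
  obtain ⟨h1, h2, h3, h4⟩ := sigma_facts β hβ
  unfold G6; split_ifs with hA hB
  · exact ⟨1, sigma1 β / 2 + (-2), by linarith, fun t => exp_mul_aux1 _ _ t⟩
  · exact ⟨2, sigma1 β / 2 + (-2), by linarith, fun t => exp_mul_aux2 _ _ t⟩
  · exact ⟨1, sigma1 β / 2 + (-2 * β), by linarith, fun t => exp_mul_aux1 _ _ t⟩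

lemma rep (β : ℝ) (hβ : 0 < β) (i : Fin 6) :
    ∃ (k : ℕ) (a : ℝ), a < sigma2 β ∧
      ∀ t : ℝ, Real.exp (sigma1 β * t / 2) * Gvec i β t = t ^ k * Real.exp (a * t) := by
  fin_cases i
  · exact rep1 β hβ
  · exact rep2 β hβ
  · exact rep3 β hβ
  · exact rep4 β hβ
  · exact rep5 β hβ
  · exact rep6 β hβ

/-- **Boundedness and integrability of `e^{−σ₂τ} G̃ᵢ`**: for each `i = 1,…,6` these
functions of `τ` are bounded on `(0,∞)` for every `β > 0`, and integrable on `(0,∞)`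
for every `β > 2`. -/
theorem Gtilde_bounded_and_integrable :
    (∀ β : ℝ, 0 < β → ∀ i : Fin 6,
      ∃ C : ℝ, ∀ τ ∈ Set.Ioi (0:ℝ), |Real.exp (-(sigma2 β) * τ) * Gtilde i β τ| ≤ C) ∧
    (∀ β : ℝ, 2 < β → ∀ i : Fin 6,
      IntegrableOn (fun τ => Real.exp (-(sigma2 β) * τ) * Gtilde i β τ)
        (Set.Ioi 0) volume) := by
  have main : ∀ β : ℝ, 0 < β → ∀ i : Fin 6,
      (∃ C : ℝ, ∀ τ ∈ Set.Ioi (0:ℝ), |Real.exp (-(sigma2 β) * τ) * Gtilde i β τ| ≤ C) ∧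
      (0 < sigma2 β → IntegrableOn (fun τ => Real.exp (-(sigma2 β) * τ) * Gtilde i β τ)
        (Set.Ioi 0) volume) := by
    intro β hβ i
    obtain ⟨k, a, hlt, hrep⟩ := rep β hβ i
    have hs2 : 0 ≤ sigma2 β := (sigma_facts β hβ).2.2.1
    have hG : ∀ τ : ℝ, Gtilde i β τ = ∫ t in (0:ℝ)..τ, t ^ k * Real.exp (a * t) := fun τ =>
      intervalIntegral.integral_congr fun t _ => hrep t
    have hm := master k hs2 hlt
    constructor
    · obtain ⟨C, hC⟩ := hm.1
      exact ⟨C, fun τ hτ => by rw [hG]; exact hC τ hτ⟩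
    · intro h
      have heq : (fun τ => Real.exp (-(sigma2 β) * τ) * Gtilde i β τ)
          = fun τ => Real.exp (-(sigma2 β) * τ) * ∫ t in (0:ℝ)..τ, t ^ k * Real.exp (a * t) :=
        funext fun τ => by rw [hG]
      rw [heq]
      exact hm.2 h
  refine ⟨fun β hβ i => (main β hβ i).1, fun β hβ i => (main β (by linarith) i).2 ?_⟩
  unfold sigma2
  rw [if_neg (not_le.mpr hβ)]
  linarith
end
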